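/- For every U-invariant f ∈ C_c(F^×, K) and every x ∈ F^×, the sum ((1−ϖ)⁻¹f)(x) := Σ_{n=0}^∞ f(ϖ⁻ⁿx) has only finitely many nonzero terms; the resulting function on F^× extends to a locally constant compactly supported function (1−ϖ)⁻¹f : F → K. Moreover, the map f ↦ (1−ϖ)⁻¹f is an injective K-linear F^×-equivariant map from C_c(F^×, K)^U into C_c⁰(F, K), and its image is exactly C_c⁰(F, K)^U, the space of U-invariant locally constant compactly supported functions on F. -/

import Mathlib

open Filter

variable {F K : Type*}

/-- `f` belongs to `C_c(F^×, K)`, viewed as the subspace of `C_c(F, K)` of continuous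
compactly supported functions vanishing identically near `0`. -/
def MemCcUnits [Field F] [TopologicalSpace F] [TopologicalSpace K] [Zero K]
    (f : F → K) : Prop :=
  Continuous f ∧ HasCompactSupport f ∧ f =ᶠ[nhds (0 : F)] 0

/-- `f` is invariant under the action `(u·f)(x) = f(u⁻¹x)` of the unit group
`U = {u | ord u = 0}`. -/
def IsUnitInv [Field F] (ord : F → ℤ) (f : F → K) : Prop :=
  ∀ u x : F, u ≠ 0 → ord u = 0 → f (u * x) = f x

/-- The sum `((1-ϖ)⁻¹ f)(x) = ∑_{n≥0} f(ϖ⁻ⁿ x)` (a `finsum`, i.e. it has the asserted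
value whenever only finitely many terms are nonzero). -/
noncomputable def geomSum [Field F] [AddCommMonoid K] (ϖ : F) (f : F → K) (x : F) : K :=
  ∑ᶠ n : ℕ, f ((ϖ ^ n)⁻¹ * x)

set_option linter.unusedSectionVars false
set_option maxHeartbeats 1000000

open Function

section
section OrdAux

variable [Field F] (ord : F → ℤ)
  (hord : ∀ x y : F, x ≠ 0 → y ≠ 0 → ord (x * y) = ord x + ord y)

include hord

private lemma pord_one : ord 1 = 0 := by
  have h := hord 1 1 one_ne_zero one_ne_zero
  rw [mul_one] at h
  omega

private lemma pord_inv {x : F} (hx : x ≠ 0) : ord x⁻¹ = -ord x := by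
  have h := hord x x⁻¹ hx (inv_ne_zero hx)
  rw [mul_inv_cancel₀ hx, pord_one ord hord] at h
  omega

private lemma pord_pow {x : F} (hx : x ≠ 0) (n : ℕ) : ord (x ^ n) = n * ord x := by
  induction n with
  | zero => simpa using pord_one ord hord
  | succ n ih =>
    rw [pow_succ, hord _ _ (pow_ne_zero _ hx) hx, ih]
    push_cast; ring

private lemma pord_zpow {x : F} (hx : x ≠ 0) (n : ℤ) : ord (x ^ n) = n * ord x := by
  obtain ⟨m, rfl | rfl⟩ := n.eq_nat_or_neg
  · rw [zpow_natCast, pord_pow ord hord hx]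
  · rw [zpow_neg, zpow_natCast, pord_inv ord hord (pow_ne_zero _ hx),
      pord_pow ord hord hx]
    ring

end OrdAux

/-- The closed "ball" `{x | x = 0 ∨ c ≤ ord x}`. -/
private def pball [Field F] (ord : F → ℤ) (c : ℤ) : Set F :=
  {x : F | x = 0 ∨ c ≤ ord x}

private lemma mem_pball [Field F] (ord : F → ℤ) (c : ℤ) (x : F) :
    x ∈ pball ord c ↔ x = 0 ∨ c ≤ ord x := Iff.rfl

section TopAux

variable [Field F] [TopologicalSpace F] [IsTopologicalRing F]

private lemma pball_mem_nhds (ord : F → ℤ)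
    (hbasis : (nhds (0 : F)).HasBasis (fun _ : ℕ => True)
      (fun n => {x : F | x = 0 ∨ (n : ℤ) ≤ ord x})) (n : ℕ) :
    pball ord (n : ℤ) ∈ nhds (0 : F) :=
  hbasis.mem_of_mem trivial

private lemma pt2 (ord : F → ℤ)
    (hbasis : (nhds (0 : F)).HasBasis (fun _ : ℕ => True)
      (fun n => {x : F | x = 0 ∨ (n : ℤ) ≤ ord x})) :
    T2Space F := by
  apply IsTopologicalAddGroup.t2Space_of_zero_sep
  intro x hx
  refine ⟨pball ord ((ord x).toNat + 1 : ℕ), pball_mem_nhds ord hbasis _, ?_⟩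
  rw [mem_pball]
  push_neg
  refine ⟨hx, ?_⟩
  push_cast
  omega

private lemma pball_compact (ord : F → ℤ)
    (hord : ∀ x y : F, x ≠ 0 → y ≠ 0 → ord (x * y) = ord x + ord y)
    (ϖ : F) (hϖ0 : ϖ ≠ 0) (hϖ : ord ϖ = 1)
    (hcomp : IsCompact {x : F | x = 0 ∨ 0 ≤ ord x}) (c : ℤ) :
    IsCompact (pball ord c) := by
  have hzp : ∀ m : ℤ, ord (ϖ ^ m) = m := by
    intro m; rw [pord_zpow ord hord hϖ0, hϖ, mul_one]
  have himg : pball ord c = (fun y => ϖ ^ c * y) '' (pball ord 0) := by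
    ext x
    constructor
    · intro hx
      by_cases h0 : x = 0
      · exact ⟨0, Or.inl rfl, by simp [h0]⟩
      · have hc : c ≤ ord x := hx.resolve_left h0
        refine ⟨ϖ ^ (-c) * x, Or.inr ?_, ?_⟩
        · rw [hord _ _ (zpow_ne_zero _ hϖ0) h0, hzp]
          omega
        · show ϖ ^ c * (ϖ ^ (-c) * x) = x
          rw [← mul_assoc, ← zpow_add₀ hϖ0]
          simp
    · rintro ⟨y, hy, rfl⟩
      by_cases h0 : y = 0
      · exact Or.inl (by simp [h0])
      · have h0' : 0 ≤ ord y := hy.resolve_left h0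
        refine Or.inr ?_
        rw [hord _ _ (zpow_ne_zero _ hϖ0) h0, hzp]
        omega
  rw [himg]
  exact hcomp.image (continuous_mul_left _)

private lemma pball_nhds_one (ord : F → ℤ)
    (hord : ∀ x y : F, x ≠ 0 → y ≠ 0 → ord (x * y) = ord x + ord y)
    (ϖ : F) (hϖ0 : ϖ ≠ 0) (hϖ : ord ϖ = 1)
    (hbasis : (nhds (0 : F)).HasBasis (fun _ : ℕ => True)
      (fun n => {x : F | x = 0 ∨ (n : ℤ) ≤ ord x})) :
    pball ord 0 ∈ nhds (1 : F) := by
  have hzp : ∀ m : ℤ, ord (ϖ ^ m) = m := by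
    intro m; rw [pord_zpow ord hord hϖ0, hϖ, mul_one]
  by_contra hO
  -- for each `k`, pick `w k` near 1 with negative valuation
  have hV : ∀ k : ℕ, ∃ w : F, (w ^ (k + 1) - 1 ∈ pball ord ((k : ℤ) + 1)) ∧
      w ≠ 0 ∧ ord w < 0 := by
    intro k
    have hcont : Continuous fun y : F => y ^ (k + 1) - 1 := by continuity
    have hmem : (fun y : F => y ^ (k + 1) - 1) ⁻¹' (pball ord ((k : ℤ) + 1)) ∈ nhds (1 : F) := by
      apply hcont.continuousAt.preimage_mem_nhds
      simp only [one_pow, sub_self]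
      have := pball_mem_nhds ord hbasis (k + 1)
      push_cast at this ⊢
      exact this
    have hns : ¬ ((fun y : F => y ^ (k + 1) - 1) ⁻¹' (pball ord ((k : ℤ) + 1)) ⊆ pball ord 0) :=
      fun h => hO (Filter.mem_of_superset hmem h)
    obtain ⟨w, hw1, hw2⟩ := Set.not_subset.1 hns
    rw [mem_pball] at hw2
    push_neg at hw2
    exact ⟨w, hw1, hw2.1, by omega⟩
  choose w hw1 hw0 hwneg using hV
  set a : ℕ → F := fun k => w k ^ (k + 1) with ha_def
  have ha0 : ∀ k, a k ≠ 0 := fun k => pow_ne_zero _ (hw0 k)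
  have haord : ∀ k : ℕ, ord (a k) ≤ -(k + 1 : ℤ) := by
    intro k
    have := pord_pow ord hord (hw0 k) (k + 1)
    rw [this]
    have hwk := hwneg k
    have h1 : ord (w k) ≤ -1 := by omega
    have := mul_le_mul_of_nonneg_left h1 (by positivity : (0 : ℤ) ≤ (k + 1 : ℕ))
    push_cast at this ⊢
    nlinarith [this]
  -- `a k → 1`
  have ha1 : Filter.Tendsto (fun k => a k - 1) Filter.atTop (nhds (0 : F)) := by
    rw [hbasis.tendsto_right_iff]
    intro N _
    filter_upwards [Filter.eventually_ge_atTop N] with k hk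
    rcases hw1 k with h | h
    · exact Or.inl h
    · exact Or.inr (le_trans (by exact_mod_cast Nat.le_succ_of_le hk) h)
  have ha : Filter.Tendsto a Filter.atTop (nhds (1 : F)) := by
    have := ha1.add (tendsto_const_nhds (x := (1 : F)))
    simpa using this
  -- `ϖ ^ (-ord (a k)) → 0`
  have hb : Filter.Tendsto (fun k => ϖ ^ (-ord (a k))) Filter.atTop (nhds (0 : F)) := by
    rw [hbasis.tendsto_right_iff]
    intro N _
    filter_upwards [Filter.eventually_ge_atTop N] with k hk
    refine Or.inr ?_
    rw [hzp]
    have := haord k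
    omega
  have hs : Filter.Tendsto (fun k => ϖ ^ (-ord (a k)) * a k) Filter.atTop (nhds (0 : F)) := by
    have := hb.mul ha
    simpa using this
  have hev : ∀ᶠ k in Filter.atTop, ϖ ^ (-ord (a k)) * a k ∈ pball ord ((1 : ℕ) : ℤ) :=
    hs.eventually_mem (pball_mem_nhds ord hbasis 1)
  obtain ⟨k, hk⟩ := hev.exists
  have hne : ϖ ^ (-ord (a k)) * a k ≠ 0 := mul_ne_zero (zpow_ne_zero _ hϖ0) (ha0 k)
  have hordk : ord (ϖ ^ (-ord (a k)) * a k) = 0 := by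
    rw [hord _ _ (zpow_ne_zero _ hϖ0) (ha0 k), hzp]
    ring
  rcases hk with h | h
  · exact hne h
  · rw [hordk] at h
    omega

end TopAux

section TopAux2

variable [Field F] [TopologicalSpace F] [IsTopologicalRing F]
  (ord : F → ℤ)
  (hord : ∀ x y : F, x ≠ 0 → y ≠ 0 → ord (x * y) = ord x + ord y)
  (ϖ : F) (hϖ0 : ϖ ≠ 0) (hϖ : ord ϖ = 1)
  (hbasis : (nhds (0 : F)).HasBasis (fun _ : ℕ => True)
      (fun n => {x : F | x = 0 ∨ (n : ℤ) ≤ ord x}))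
  (hcomp : IsCompact {x : F | x = 0 ∨ 0 ≤ ord x})

include hord hϖ0 hϖ hbasis hcomp

/-- Near `1` everything is a unit. -/
private lemma punit_nhds :
    ∃ V ∈ nhds (1 : F), ∀ w ∈ V, w ≠ 0 ∧ ord w = 0 := by
  haveI : T2Space F := pt2 ord hbasis
  have h1c : IsClosed (pball ord 1) :=
    (pball_compact ord hord ϖ hϖ0 hϖ hcomp 1).isClosed
  have h1n : (1 : F) ∉ pball ord 1 := by
    rw [mem_pball]
    push_neg
    exact ⟨one_ne_zero, by rw [pord_one ord hord]; omega⟩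
  refine ⟨pball ord 0 ∩ (pball ord 1)ᶜ, Filter.inter_mem
    (pball_nhds_one ord hord ϖ hϖ0 hϖ hbasis)
    (h1c.isOpen_compl.mem_nhds h1n), ?_⟩
  rintro w ⟨hw0, hw1⟩
  rw [Set.mem_compl_iff, mem_pball] at hw1
  push_neg at hw1
  refine ⟨hw1.1, ?_⟩
  have := hw0.resolve_left hw1.1
  have := hw1.2
  omega

/-- `ord` is locally constant away from `0`. -/
private lemma pord_const_nhds {x : F} (hx : x ≠ 0) :
    ∃ U : Set F, IsOpen U ∧ x ∈ U ∧ ∀ y ∈ U, y ≠ 0 ∧ ord y = ord x := by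
  obtain ⟨V, hV, hVp⟩ := punit_nhds ord hord ϖ hϖ0 hϖ hbasis hcomp
  refine ⟨(fun y => x⁻¹ * y) ⁻¹' (interior V), (isOpen_interior).preimage
    (continuous_mul_left _), ?_, ?_⟩
  · show x⁻¹ * x ∈ interior V
    rw [inv_mul_cancel₀ hx, mem_interior_iff_mem_nhds]
    exact hV
  · intro y hy
    obtain ⟨hne, hordy⟩ := hVp _ (interior_subset hy)
    have hy0 : y ≠ 0 := by
      rintro rfl
      exact hne (mul_zero x⁻¹)
    have h := hord x⁻¹ y (inv_ne_zero hx) hy0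
    rw [hordy, pord_inv ord hord hx] at h
    exact ⟨hy0, by omega⟩

/-- `ord` is bounded below on compact sets. -/
private lemma pbdd {C : Set F} (hC : IsCompact C) :
    ∃ M : ℤ, ∀ x ∈ C, x ≠ 0 → M ≤ ord x := by
  have hopen : ∀ x : F, ∃ U : Set F, U ∈ nhds x ∧ ∃ m : ℤ, ∀ y ∈ U, y = 0 ∨ m ≤ ord y := by
    intro x
    by_cases hx : x = 0
    · refine ⟨pball ord 0, ?_, 0, fun y hy => hy⟩
      rw [hx]
      exact pball_mem_nhds ord hbasis 0
    · obtain ⟨U, hUo, hxU, hUp⟩ := pord_const_nhds ord hord ϖ hϖ0 hϖ hbasis hcomp hx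
      exact ⟨U, hUo.mem_nhds hxU, ord x, fun y hy => Or.inr ((hUp y hy).2).ge⟩
  choose U hU m hm using hopen
  obtain ⟨t, ht⟩ := hC.elim_nhds_subcover U (fun x _ => hU x)
  obtain ⟨M, hM⟩ : ∃ M : ℤ, ∀ x ∈ t, M ≤ m x := by
    rcases t.eq_empty_or_nonempty with rfl | hne
    · exact ⟨0, by simp⟩
    · exact ⟨t.inf' hne m, fun x hx => Finset.inf'_le _ hx⟩
  refine ⟨M, fun x hxC hx0 => ?_⟩
  have := ht.2 hxC
  simp only [Set.mem_iUnion] at this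
  obtain ⟨i, hit, hxU⟩ := this
  rcases hm i x hxU with h | h
  · exact absurd h hx0
  · exact le_trans (hM i hit) h

end TopAux2

section FunAux

variable [Field F] [TopologicalSpace F] [IsTopologicalRing F]
  [Field K] [TopologicalSpace K]
  (ord : F → ℤ)
  (hord : ∀ x y : F, x ≠ 0 → y ≠ 0 → ord (x * y) = ord x + ord y)
  (ϖ : F) (hϖ0 : ϖ ≠ 0) (hϖ : ord ϖ = 1)
  (hbasis : (nhds (0 : F)).HasBasis (fun _ : ℕ => True)
      (fun n => {x : F | x = 0 ∨ (n : ℤ) ≤ ord x}))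
  (hcomp : IsCompact {x : F | x = 0 ∨ 0 ≤ ord x})

include hord hϖ0 hϖ

private lemma parg (x : F) (hx : x ≠ 0) (n : ℕ) :
    (ϖ ^ n)⁻¹ * x ≠ 0 ∧ ord ((ϖ ^ n)⁻¹ * x) = ord x - n := by
  have hpne : (ϖ : F) ^ n ≠ 0 := pow_ne_zero n hϖ0
  refine ⟨mul_ne_zero (inv_ne_zero hpne) hx, ?_⟩
  rw [hord _ _ (inv_ne_zero hpne) hx, pord_inv ord hord hpne,
    pord_pow ord hord hϖ0, hϖ]
  ring

omit hord hϖ0 hϖ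
include hbasis

private lemma pvanish_hi (f : F → K) (hev : f =ᶠ[nhds (0 : F)] (0 : F → K)) :
    ∃ N : ℤ, (∀ x : F, N ≤ ord x → f x = 0) ∧ f 0 = 0 := by
  rw [Filter.EventuallyEq, hbasis.eventually_iff] at hev
  obtain ⟨n, -, hn⟩ := hev
  exact ⟨n, fun x hx => hn (Or.inr hx), hn (Or.inl rfl)⟩

omit hbasis
include hord hϖ0 hϖ hbasis hcomp

private lemma pvanish_lo (f : F → K) (hsupp : HasCompactSupport f) :
    ∃ M : ℤ, ∀ x : F, x ≠ 0 → ord x < M → f x = 0 := by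
  obtain ⟨M, hM⟩ := pbdd ord hord ϖ hϖ0 hϖ hbasis hcomp hsupp
  refine ⟨M, fun x hx hlt => ?_⟩
  by_contra hf
  have hmem : x ∈ tsupport f := subset_closure hf
  have := hM x hmem hx
  omega

omit hord hϖ0 hϖ hbasis hcomp
include hord

private lemma pcongr (f : F → K) (hinv : IsUnitInv ord f) {x y : F}
    (hx : x ≠ 0) (hy : y ≠ 0) (h : ord x = ord y) : f x = f y := by
  have hu : y * x⁻¹ ≠ 0 := mul_ne_zero hy (inv_ne_zero hx)
  have hu0 : ord (y * x⁻¹) = 0 := by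
    rw [hord _ _ hy (inv_ne_zero hx), pord_inv ord hord hx]
    omega
  have := hinv (y * x⁻¹) x hu hu0
  rw [mul_assoc, inv_mul_cancel₀ hx, mul_one] at this
  exact this.symm

include hϖ0 hϖ

private lemma pgeom_congr (f : F → K) (hinv : IsUnitInv ord f) {x y : F}
    (hx : x ≠ 0) (hy : y ≠ 0) (h : ord x = ord y) :
    geomSum ϖ f x = geomSum ϖ f y := by
  simp only [geomSum]
  refine finsum_congr fun n => ?_
  obtain ⟨hx', hox⟩ := parg ord hord ϖ hϖ0 hϖ x hx n
  obtain ⟨hy', hoy⟩ := parg ord hord ϖ hϖ0 hϖ y hy n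
  exact pcongr ord hord f hinv hx' hy' (by omega)

private lemma psupp (f : F → K) (M : ℤ)
    (hM : ∀ y : F, y ≠ 0 → ord y < M → f y = 0) (x : F) (hx : x ≠ 0) :
    support (fun n : ℕ => f ((ϖ ^ n)⁻¹ * x)) ⊆ ↑(Finset.range ((ord x - M).toNat + 1)) := by
  intro n hn
  simp only [mem_support] at hn
  obtain ⟨hne, hordn⟩ := parg ord hord ϖ hϖ0 hϖ x hx n
  have hge : M ≤ ord ((ϖ ^ n)⁻¹ * x) := by
    by_contra h
    push_neg at h
    exact hn (hM _ hne h)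
  simp only [Finset.coe_range, Set.mem_Iio]
  omega

private lemma pgeom_zero (f : F → K) (M : ℤ)
    (hM : ∀ y : F, y ≠ 0 → ord y < M → f y = 0) (x : F) (hx : x ≠ 0)
    (hlt : ord x < M) : geomSum ϖ f x = 0 := by
  refine finsum_eq_zero_of_forall_eq_zero fun n => ?_
  obtain ⟨hne, hordn⟩ := parg ord hord ϖ hϖ0 hϖ x hx n
  exact hM _ hne (by omega)

private lemma pshift (f : F → K) (M : ℤ)
    (hM : ∀ y : F, y ≠ 0 → ord y < M → f y = 0) (x : F) (hx : x ≠ 0) :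
    geomSum ϖ f x = f x + geomSum ϖ f (ϖ⁻¹ * x) := by
  classical
  set R := (ord x - M).toNat with hR
  have hx' : ϖ⁻¹ * x ≠ 0 := mul_ne_zero (inv_ne_zero hϖ0) hx
  have hxord : ord (ϖ⁻¹ * x) = ord x - 1 := by
    rw [hord _ _ (inv_ne_zero hϖ0) hx, pord_inv ord hord hϖ0, hϖ]
    ring
  have key : ∀ n : ℕ, ((ϖ : F) ^ (n + 1))⁻¹ * x = (ϖ ^ n)⁻¹ * (ϖ⁻¹ * x) := by
    intro n
    rw [pow_succ, mul_inv_rev]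
    ring
  have hsa : support (fun n : ℕ => f ((ϖ ^ n)⁻¹ * x)) ⊆ ↑(Finset.range (R + 1)) :=
    psupp ord hord ϖ hϖ0 hϖ f M hM x hx
  have hsb : support (fun n : ℕ => f ((ϖ ^ n)⁻¹ * (ϖ⁻¹ * x))) ⊆ ↑(Finset.range R) := by
    intro n hn
    simp only [mem_support] at hn
    obtain ⟨hne, hordn⟩ := parg ord hord ϖ hϖ0 hϖ (ϖ⁻¹ * x) hx' n
    have hge : M ≤ ord ((ϖ ^ n)⁻¹ * (ϖ⁻¹ * x)) := by
      by_contra h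
      push_neg at h
      exact hn (hM _ hne h)
    simp only [Finset.coe_range, Set.mem_Iio]
    omega
  simp only [geomSum]
  rw [finsum_eq_finset_sum_of_support_subset _ hsa,
    finsum_eq_finset_sum_of_support_subset _ hsb,
    Finset.sum_range_succ']
  simp only [key, pow_zero, inv_one, one_mul]
  ring

end FunAux

end

/-- For `U`-invariant `f ∈ C_c(F^×, K)` the sum `∑_{n≥0} f(ϖ⁻ⁿx)` has
finitely many nonzero terms for each `x ∈ F^×`, and the resulting function on `F^×`
extends to a `U`-invariant locally constant compactly supported function
`(1-ϖ)⁻¹f : F → K`. The map `f ↦ (1-ϖ)⁻¹f` is an injective `K`-linear `F^×`-equivariant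
map `C_c(F^×, K)^U → C_c⁰(F, K)` with image exactly `C_c⁰(F, K)^U`. -/
theorem stmt7 [Field F] [TopologicalSpace F] [IsTopologicalRing F]
    [Field K] [TopologicalSpace K] [T2Space K] [IsTopologicalRing K]
    (ord : F → ℤ)
    (hord : ∀ x y : F, x ≠ 0 → y ≠ 0 → ord (x * y) = ord x + ord y)
    (ϖ : F) (hϖ0 : ϖ ≠ 0) (hϖ : ord ϖ = 1)
    (hbasis : (nhds (0 : F)).HasBasis (fun _ : ℕ => True)
      (fun n => {x : F | x = 0 ∨ (n : ℤ) ≤ ord x}))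
    (hcomp : IsCompact {x : F | x = 0 ∨ 0 ≤ ord x}) :
    -- finiteness of the sums
    (∀ f : F → K, MemCcUnits f → IsUnitInv ord f → ∀ x : F, x ≠ 0 →
      (Function.support fun n : ℕ => f ((ϖ ^ n)⁻¹ * x)).Finite) ∧
    -- the sum extends to a `U`-invariant element of `C_c⁰(F, K)`
    (∀ f : F → K, MemCcUnits f → IsUnitInv ord f →
      ∃ g : F → K, IsLocallyConstant g ∧ HasCompactSupport g ∧ IsUnitInv ord g ∧
        ∀ x : F, x ≠ 0 → g x = geomSum ϖ f x) ∧
    -- injectivity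
    (∀ f₁ f₂ : F → K, MemCcUnits f₁ → IsUnitInv ord f₁ → MemCcUnits f₂ → IsUnitInv ord f₂ →
      (∀ x : F, x ≠ 0 → geomSum ϖ f₁ x = geomSum ϖ f₂ x) → f₁ = f₂) ∧
    -- `K`-linearity
    (∀ (f₁ f₂ : F → K) (c : K), MemCcUnits f₁ → IsUnitInv ord f₁ →
      MemCcUnits f₂ → IsUnitInv ord f₂ → ∀ x : F, x ≠ 0 →
      geomSum ϖ (c • f₁ + f₂) x = c • geomSum ϖ f₁ x + geomSum ϖ f₂ x) ∧
    -- `F^×`-equivariance for the action `(a·f)(x) = f(a⁻¹x)`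
    (∀ (f : F → K) (a : F), a ≠ 0 → MemCcUnits f → IsUnitInv ord f → ∀ x : F, x ≠ 0 →
      geomSum ϖ (fun y => f (a⁻¹ * y)) x = geomSum ϖ f (a⁻¹ * x)) ∧
    -- the image is exactly `C_c⁰(F, K)^U`
    (∀ g : F → K, IsLocallyConstant g → HasCompactSupport g → IsUnitInv ord g →
      ∃ f : F → K, MemCcUnits f ∧ IsUnitInv ord f ∧
        ∀ x : F, x ≠ 0 → g x = geomSum ϖ f x) := by
  classical
  haveI hT2 : T2Space F := pt2 ord hbasis
  have hordpow : ∀ n : ℕ, ord (ϖ ^ n) = n := by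
    intro n
    rw [pord_pow ord hord hϖ0, hϖ, mul_one]
  have hfin : ∀ f : F → K, MemCcUnits f → IsUnitInv ord f → ∀ x : F, x ≠ 0 →
      (Function.support fun n : ℕ => f ((ϖ ^ n)⁻¹ * x)).Finite := by
    intro f hf hinv x hx
    obtain ⟨M, hM⟩ := pvanish_lo ord hord ϖ hϖ0 hϖ hbasis hcomp f hf.2.1
    exact Set.Finite.subset (Finset.range _).finite_toSet
      (psupp ord hord ϖ hϖ0 hϖ f M hM x hx)
  refine ⟨hfin, ?_, ?_, ?_, ?_, ?_⟩
  -- (2) extension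
  · intro f hf hinv
    obtain ⟨M, hM⟩ := pvanish_lo ord hord ϖ hϖ0 hϖ hbasis hcomp f hf.2.1
    obtain ⟨N, hN, hf0⟩ := pvanish_hi ord hbasis f hf.2.2
    have hind : ∀ d : ℕ, N.toNat ≤ d →
        geomSum ϖ f (ϖ ^ d) = geomSum ϖ f (ϖ ^ N.toNat) := by
      intro d
      induction d with
      | zero =>
        intro hd
        have h0 : N.toNat = 0 := Nat.le_zero.mp hd
        rw [h0]
      | succ d ih =>
        intro hd
        rcases Nat.lt_or_ge d N.toNat with h | h
        · have h1 : N.toNat = d + 1 := by omega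
          rw [h1]
        · have hstep := pshift ord hord ϖ hϖ0 hϖ f M hM (ϖ ^ (d + 1))
            (pow_ne_zero _ hϖ0)
          have harg : ϖ⁻¹ * ϖ ^ (d + 1) = ϖ ^ d := by
            rw [pow_succ, mul_comm, mul_assoc, mul_inv_cancel₀ hϖ0, mul_one]
          have hfz : f (ϖ ^ (d + 1)) = 0 := by
            apply hN
            rw [hordpow]
            omega
          rw [hstep, hfz, harg, zero_add]
          exact ih h
    have hconst : ∀ x : F, x ≠ 0 → (N.toNat : ℤ) ≤ ord x →
        geomSum ϖ f x = geomSum ϖ f (ϖ ^ N.toNat) := by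
      intro x hx hge
      have hx' : geomSum ϖ f x = geomSum ϖ f (ϖ ^ (ord x).toNat) := by
        apply pgeom_congr ord hord ϖ hϖ0 hϖ f hinv hx (pow_ne_zero _ hϖ0)
        rw [hordpow]
        omega
      rw [hx']
      exact hind _ (by omega)
    refine ⟨fun x => if x = 0 then geomSum ϖ f (ϖ ^ N.toNat) else geomSum ϖ f x,
      ?_, ?_, ?_, ?_⟩
    · rw [IsLocallyConstant.iff_exists_open]
      intro x
      by_cases hx : x = 0
      · subst hx
        refine ⟨interior (pball ord ((N.toNat : ℕ) : ℤ)), isOpen_interior, ?_, ?_⟩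
        · rw [mem_interior_iff_mem_nhds]
          exact pball_mem_nhds ord hbasis N.toNat
        · intro y hy
          have hy' := interior_subset hy
          by_cases hy0 : y = 0
          · simp [hy0]
          · have hyo : (N.toNat : ℤ) ≤ ord y := hy'.resolve_left hy0
            show (if y = 0 then geomSum ϖ f (ϖ ^ N.toNat) else geomSum ϖ f y)
              = (if (0 : F) = 0 then geomSum ϖ f (ϖ ^ N.toNat) else geomSum ϖ f 0)
            rw [if_neg hy0, if_pos rfl]
            exact hconst y hy0 hyo
      · obtain ⟨U, hUo, hxU, hUp⟩ := pord_const_nhds ord hord ϖ hϖ0 hϖ hbasis hcomp hx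
        refine ⟨U, hUo, hxU, fun y hy => ?_⟩
        obtain ⟨hy0, hyord⟩ := hUp y hy
        rw [if_neg hy0, if_neg hx]
        exact pgeom_congr ord hord ϖ hϖ0 hϖ f hinv hy0 hx hyord
    · apply HasCompactSupport.intro' (pball_compact ord hord ϖ hϖ0 hϖ hcomp (min M 0))
        ((pball_compact ord hord ϖ hϖ0 hϖ hcomp (min M 0)).isClosed)
      intro x hx
      rw [mem_pball] at hx
      push_neg at hx
      obtain ⟨hx0, hlt⟩ := hx
      rw [if_neg hx0]
      exact pgeom_zero ord hord ϖ hϖ0 hϖ f M hM x hx0 (by omega)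
    · intro u x hu hu0
      by_cases hx : x = 0
      · rw [hx, mul_zero]
      · have hux : u * x ≠ 0 := mul_ne_zero hu hx
        show (if u * x = 0 then geomSum ϖ f (ϖ ^ N.toNat) else geomSum ϖ f (u * x))
          = (if x = 0 then geomSum ϖ f (ϖ ^ N.toNat) else geomSum ϖ f x)
        rw [if_neg hux, if_neg hx]
        refine pgeom_congr ord hord ϖ hϖ0 hϖ f hinv hux hx ?_
        rw [hord u x hu hx, hu0, zero_add]
    · intro x hx
      show (if x = 0 then geomSum ϖ f (ϖ ^ N.toNat) else geomSum ϖ f x) = geomSum ϖ f x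
      rw [if_neg hx]
  -- (3) injectivity
  · intro f₁ f₂ hf₁ hinv₁ hf₂ hinv₂ h
    obtain ⟨M₁, hM₁⟩ := pvanish_lo ord hord ϖ hϖ0 hϖ hbasis hcomp f₁ hf₁.2.1
    obtain ⟨M₂, hM₂⟩ := pvanish_lo ord hord ϖ hϖ0 hϖ hbasis hcomp f₂ hf₂.2.1
    obtain ⟨N₁, hN₁, h01⟩ := pvanish_hi ord hbasis f₁ hf₁.2.2
    obtain ⟨N₂, hN₂, h02⟩ := pvanish_hi ord hbasis f₂ hf₂.2.2
    funext x
    by_cases hx : x = 0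
    · rw [hx, h01, h02]
    · have hx' : ϖ⁻¹ * x ≠ 0 := mul_ne_zero (inv_ne_zero hϖ0) hx
      have e₁ := pshift ord hord ϖ hϖ0 hϖ f₁ M₁ hM₁ x hx
      have e₂ := pshift ord hord ϖ hϖ0 hϖ f₂ M₂ hM₂ x hx
      have hh := h x hx
      rw [e₁, e₂, h (ϖ⁻¹ * x) hx'] at hh
      exact add_right_cancel hh
  -- (4) linearity
  · intro f₁ f₂ c hf₁ hinv₁ hf₂ hinv₂ x hx
    have h1 : (support fun n : ℕ => f₁ ((ϖ ^ n)⁻¹ * x)).Finite := hfin f₁ hf₁ hinv₁ x hx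
    have h2 : (support fun n : ℕ => f₂ ((ϖ ^ n)⁻¹ * x)).Finite := hfin f₂ hf₂ hinv₂ x hx
    have h1' : (support fun n : ℕ => c • f₁ ((ϖ ^ n)⁻¹ * x)).Finite := by
      apply h1.subset
      intro n hn
      simp only [mem_support] at hn ⊢
      intro h0
      apply hn
      rw [h0, smul_zero]
    simp only [geomSum, Pi.add_apply, Pi.smul_apply]
    rw [finsum_add_distrib h1' h2, smul_finsum' c h1]
  -- (5) equivariance
  · intro f a ha hf hinv x hx
    simp only [geomSum]
    exact finsum_congr fun n => congrArg f (by ring)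
  -- (6) surjectivity onto U-invariants
  · intro g hlc hgsupp hginv
    obtain ⟨Mg, hMg'⟩ := pbdd ord hord ϖ hϖ0 hϖ hbasis hcomp hgsupp
    have hMg : ∀ x : F, x ≠ 0 → ord x < Mg → g x = 0 := by
      intro x hx hlt
      by_contra h0
      have := hMg' x (subset_closure h0) hx
      omega
    obtain ⟨U, hUo, hU0, hUc⟩ := (IsLocallyConstant.iff_exists_open g).1 hlc 0
    refine ⟨fun x => g x - g (ϖ⁻¹ * x), ⟨?_, ?_, ?_⟩, ?_, ?_⟩
    · exact hlc.continuous.sub (hlc.continuous.comp (continuous_mul_left ϖ⁻¹))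
    · apply HasCompactSupport.intro' (pball_compact ord hord ϖ hϖ0 hϖ hcomp Mg)
        ((pball_compact ord hord ϖ hϖ0 hϖ hcomp Mg).isClosed)
      intro x hx
      rw [mem_pball] at hx
      push_neg at hx
      obtain ⟨hx0, hlt⟩ := hx
      have hx' : ϖ⁻¹ * x ≠ 0 := mul_ne_zero (inv_ne_zero hϖ0) hx0
      have ho : ord (ϖ⁻¹ * x) = ord x - 1 := by
        rw [hord _ _ (inv_ne_zero hϖ0) hx0, pord_inv ord hord hϖ0, hϖ]
        ring
      rw [hMg x hx0 (by omega), hMg _ hx' (by omega), sub_zero]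
    · have hV : U ∩ (fun y => ϖ⁻¹ * y) ⁻¹' U ∈ nhds (0 : F) := by
        refine Filter.inter_mem (hUo.mem_nhds hU0)
          (((hUo.preimage (continuous_mul_left ϖ⁻¹)).mem_nhds) ?_)
        show ϖ⁻¹ * 0 ∈ U
        rwa [mul_zero]
      apply Filter.eventuallyEq_of_mem hV
      rintro x ⟨hx1, hx2⟩
      simp only [Pi.zero_apply]
      show g x - g (ϖ⁻¹ * x) = 0
      rw [hUc x hx1, hUc _ hx2, sub_self]
    · intro u x hu hu0
      have h1 : ϖ⁻¹ * (u * x) = u * (ϖ⁻¹ * x) := by ring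
      show g (u * x) - g (ϖ⁻¹ * (u * x)) = g x - g (ϖ⁻¹ * x)
      rw [h1, hginv u x hu hu0, hginv u (ϖ⁻¹ * x) hu hu0]
    · intro x hx
      have hords : ∀ n : ℕ, (ϖ ^ n)⁻¹ * x ≠ 0 ∧ ord ((ϖ ^ n)⁻¹ * x) = ord x - n :=
        parg ord hord ϖ hϖ0 hϖ x hx
      have hψ : ∀ n : ℕ, (ord x - Mg) < n → g ((ϖ ^ n)⁻¹ * x) = 0 := by
        intro n hn
        refine hMg _ (hords n).1 ?_
        have := (hords n).2
        omega
      have hterm : ∀ n : ℕ, g ((ϖ ^ n)⁻¹ * x) - g (ϖ⁻¹ * ((ϖ ^ n)⁻¹ * x))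
          = g ((ϖ ^ n)⁻¹ * x) - g ((ϖ ^ (n + 1))⁻¹ * x) := by
        intro n
        rw [show ϖ⁻¹ * ((ϖ ^ n)⁻¹ * x) = (ϖ ^ (n + 1))⁻¹ * x from by
          rw [pow_succ, mul_inv_rev]; ring]
      have hsupp : support (fun n : ℕ => g ((ϖ ^ n)⁻¹ * x) - g ((ϖ ^ (n + 1))⁻¹ * x))
          ⊆ ↑(Finset.range ((ord x - Mg).toNat + 1)) := by
        intro n hn
        simp only [mem_support] at hn
        simp only [Finset.coe_range, Set.mem_Iio]
        by_contra hc
        push_neg at hc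
        rw [hψ n (by omega), hψ (n + 1) (by omega), sub_self] at hn
        exact hn rfl
      have hkey : geomSum ϖ (fun y => g y - g (ϖ⁻¹ * y)) x
          = ∑ n ∈ Finset.range ((ord x - Mg).toNat + 1),
              (g ((ϖ ^ n)⁻¹ * x) - g ((ϖ ^ (n + 1))⁻¹ * x)) := by
        simp only [geomSum]
        rw [← finsum_eq_finset_sum_of_support_subset _ hsupp]
        exact finsum_congr fun n => hterm n
      rw [hkey, Finset.sum_range_sub' (fun n => g ((ϖ ^ n)⁻¹ * x))]
      rw [hψ ((ord x - Mg).toNat + 1) (by omega), sub_zero, pow_zero, inv_one, one_mul]
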